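/- (Uniform upper bound on the stream function away from the boundary.) Let ζ be a nonnegative measurable function on the upper half-plane Π with ∫_Π ζ = κ < ∞, and let Gζ(x) = (1/(2π)) ∫_Π ln(|x − ȳ|/|x − y|) ζ(y) dy. Then for every x = (x₁,x₂) ∈ Π with x₂ ≥ 1: Gζ(x) ≤ (κ/(2π)) ln 3 + (κ/(2π)) ln(3x₂) + (1/(2π)) ∫_Π ln⁺(1/|x − y|) ζ(y) dy, where ln⁺(t) = max(ln t, 0). -/

import Mathlib

open Real MeasureTheory

/-- The open upper half-plane. -/
def upperHalfPlane2 : Set (EuclideanSpace ℝ (Fin 2)) := {x | 0 < x 1}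

/-- The reflection `ȳ = (y₁, -y₂)` across the horizontal axis. -/
noncomputable def reflect (y : EuclideanSpace ℝ (Fin 2)) : EuclideanSpace ℝ (Fin 2) :=
  WithLp.toLp 2 ![y 0, -(y 1)]

/-- The half-plane stream function `Gζ(x) = (1/(2π)) ∫_Π ln(|x-ȳ|/|x-y|) ζ(y) dy`. -/
noncomputable def streamG (ζ : EuclideanSpace ℝ (Fin 2) → ℝ)
    (x : EuclideanSpace ℝ (Fin 2)) : ℝ :=
  (1 / (2 * π)) * ∫ y in upperHalfPlane2, Real.log (‖x - reflect y‖ / ‖x - y‖) * ζ y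

lemma euclid_norm_two (z : EuclideanSpace ℝ (Fin 2)) :
    ‖z‖ = Real.sqrt ((z 0)^2 + (z 1)^2) := by
  rw [EuclideanSpace.norm_eq, Fin.sum_univ_two]
  simp [Real.norm_eq_abs, sq_abs]

lemma pointwise_key (x y : EuclideanSpace ℝ (Fin 2)) (hx2 : 1 ≤ x 1) (hy : 0 < y 1) :
    0 ≤ Real.log (‖x - reflect y‖ / ‖x - y‖) ∧
    max (Real.log (1 / ‖x - y‖)) 0 ≤ Real.log (‖x - reflect y‖ / ‖x - y‖) ∧
    Real.log (‖x - reflect y‖ / ‖x - y‖)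
      ≤ Real.log 3 + Real.log (3 * x 1) + max (Real.log (1 / ‖x - y‖)) 0 := by
  have hx1 : (0:ℝ) < x 1 := lt_of_lt_of_le one_pos hx2
  have hc0 : (x - reflect y) 0 = x 0 - y 0 := by simp [reflect]
  have hc1 : (x - reflect y) 1 = x 1 + y 1 := by simp [reflect]
  have ha2 : ‖x - reflect y‖^2 = (x 0 - y 0)^2 + (x 1 + y 1)^2 := by
    rw [euclid_norm_two, Real.sq_sqrt (by positivity), hc0, hc1]
  have hb2 : ‖x - y‖^2 = (x 0 - y 0)^2 + (x 1 - y 1)^2 := by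
    rw [euclid_norm_two, Real.sq_sqrt (by positivity)]
    simp
  set a := ‖x - reflect y‖ with hadef
  set b := ‖x - y‖ with hbdef
  have ha0 : 0 ≤ a := norm_nonneg _
  have hb0 : 0 ≤ b := norm_nonneg _
  -- b ≤ a
  have hba : b ≤ a := by nlinarith
  -- x 1 ≤ a
  have hxa : x 1 ≤ a := by nlinarith
  have ha : (0:ℝ) < a := lt_of_lt_of_le hx1 hxa
  -- |x 1 - y 1| ≤ b
  have habs : y 1 ≤ x 1 + b := by nlinarith [sq_nonneg (x 0 - y 0), sq_nonneg (x 1 - y 1 + b)]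
  -- a ≤ b + 2 * x 1
  have hab : a ≤ b + 2 * x 1 := by nlinarith
  have hlog3 : (0:ℝ) ≤ Real.log 3 := Real.log_nonneg (by norm_num)
  have hlog3x : (0:ℝ) ≤ Real.log (3 * x 1) := Real.log_nonneg (by linarith)
  rcases eq_or_lt_of_le hb0 with hb | hb
  · rw [← hb, div_zero, div_zero, Real.log_zero]
    refine ⟨le_refl _, by simp, by simp; linarith⟩
  · have hdiv : Real.log (a / b) = Real.log a - Real.log b :=
      Real.log_div (ne_of_gt ha) (ne_of_gt hb)
    have hinv : Real.log (1 / b) = -Real.log b := by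
      rw [one_div, Real.log_inv]
    have hloga : 0 ≤ Real.log a := Real.log_nonneg (le_trans hx2 hxa)
    have hpos : 0 ≤ Real.log (a / b) := by
      rw [hdiv]; have := Real.log_le_log hb hba; linarith
    refine ⟨hpos, ?_, ?_⟩
    · rw [hinv]
      exact max_le (by rw [hdiv]; linarith) hpos
    · rcases le_total (x 1) b with hcase | hcase
      · have h3b : a / b ≤ 3 := by
          rw [div_le_iff₀ hb]; linarith
        have := Real.log_le_log (div_pos ha hb) h3b
        have hf : 0 ≤ max (Real.log (1 / b)) 0 := le_max_right _ _
        linarith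
      · have h3x : a ≤ 3 * x 1 := by linarith
        have h1 : Real.log a ≤ Real.log (3 * x 1) := Real.log_le_log ha h3x
        have h2 : -Real.log b ≤ max (Real.log (1 / b)) 0 := by
          rw [hinv] at *; exact le_max_left _ _
        rw [hdiv]; linarith

/-- uniform upper bound on the stream function away from the boundary. -/
theorem stream_function_upper_bound (ζ : EuclideanSpace ℝ (Fin 2) → ℝ) (κ : ℝ)
    (hζ0 : ∀ x, 0 ≤ ζ x)
    (hζint : IntegrableOn ζ upperHalfPlane2)
    (hκ : ∫ x in upperHalfPlane2, ζ x = κ)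
    (x : EuclideanSpace ℝ (Fin 2)) (hx : x ∈ upperHalfPlane2) (hx2 : 1 ≤ x 1) :
    streamG ζ x ≤ (κ / (2 * π)) * Real.log 3 + (κ / (2 * π)) * Real.log (3 * x 1)
      + (1 / (2 * π)) * ∫ y in upperHalfPlane2,
          max (Real.log (1 / ‖x - y‖)) 0 * ζ y := by
  have hπ : 0 < π := Real.pi_pos
  have hx1 : (0:ℝ) < x 1 := lt_of_lt_of_le one_pos hx2
  have hmeasS : MeasurableSet upperHalfPlane2 :=
    measurableSet_lt measurable_const
      ((EuclideanSpace.proj (1:Fin 2) : EuclideanSpace ℝ (Fin 2) →L[ℝ] ℝ).continuous.measurable)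
  set g := fun y : EuclideanSpace ℝ (Fin 2) => Real.log (‖x - reflect y‖ / ‖x - y‖) with hgdef
  set f := fun y : EuclideanSpace ℝ (Fin 2) => max (Real.log (1 / ‖x - y‖)) 0 with hfdef
  set C := Real.log 3 + Real.log (3 * x 1) with hCdef
  have hκ0 : 0 ≤ κ := by
    rw [← hκ]; exact integral_nonneg fun y => hζ0 y
  have hlog3 : (0:ℝ) ≤ Real.log 3 := Real.log_nonneg (by norm_num)
  have hlog3x : (0:ℝ) ≤ Real.log (3 * x 1) := Real.log_nonneg (by linarith)
  have hfnn : ∀ y, 0 ≤ f y * ζ y := fun y => mul_nonneg (le_max_right _ _) (hζ0 y)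
  have hInn : 0 ≤ ∫ y in upperHalfPlane2, f y * ζ y := integral_nonneg hfnn
  have hfmeas : Measurable f :=
    (Real.measurable_log.comp
      ((continuous_const.sub continuous_id).norm.measurable.const_div 1)).max measurable_const
  by_cases hgint : IntegrableOn (fun y => g y * ζ y) upperHalfPlane2
  · -- integrable case
    have hfint : IntegrableOn (fun y => f y * ζ y) upperHalfPlane2 := by
      refine hgint.mono' (hfmeas.aestronglyMeasurable.mul hζint.aestronglyMeasurable) ?_
      rw [ae_restrict_iff' hmeasS]
      refine Filter.Eventually.of_forall fun y hy => ?_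
      rw [Real.norm_eq_abs, abs_of_nonneg (hfnn y)]
      exact mul_le_mul_of_nonneg_right (pointwise_key x y hx2 hy).2.1 (hζ0 y)
    have hsumint : IntegrableOn (fun y => C * ζ y + f y * ζ y) upperHalfPlane2 :=
      (hζint.const_mul C).add hfint
    have hmono : (∫ y in upperHalfPlane2, g y * ζ y)
        ≤ ∫ y in upperHalfPlane2, (C * ζ y + f y * ζ y) := by
      refine setIntegral_mono_on hgint hsumint hmeasS fun y hy => ?_
      have h3 := (pointwise_key x y hx2 hy).2.2
      nlinarith [hζ0 y]
    have heq : (∫ y in upperHalfPlane2, (C * ζ y + f y * ζ y))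
        = C * κ + ∫ y in upperHalfPlane2, f y * ζ y := by
      rw [integral_add (hζint.const_mul C) hfint, integral_const_mul, hκ]
    rw [heq] at hmono
    have : streamG ζ x ≤ (1 / (2 * π)) * (C * κ + ∫ y in upperHalfPlane2, f y * ζ y) := by
      unfold streamG
      exact mul_le_mul_of_nonneg_left hmono (by positivity)
    calc streamG ζ x ≤ (1 / (2 * π)) * (C * κ + ∫ y in upperHalfPlane2, f y * ζ y) := this
      _ = (κ / (2 * π)) * Real.log 3 + (κ / (2 * π)) * Real.log (3 * x 1)
          + (1 / (2 * π)) * ∫ y in upperHalfPlane2, f y * ζ y := by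
        rw [hCdef]; ring
  · -- non-integrable case: the integral is 0 by convention
    have h0 : (∫ y in upperHalfPlane2, g y * ζ y) = 0 := integral_undef hgint
    have : streamG ζ x = 0 := by
      unfold streamG
      rw [show (∫ y in upperHalfPlane2, Real.log (‖x - reflect y‖ / ‖x - y‖) * ζ y)
        = ∫ y in upperHalfPlane2, g y * ζ y from rfl, h0, mul_zero]
    rw [this]
    have h1 : 0 ≤ (κ / (2 * π)) * Real.log 3 :=
      mul_nonneg (div_nonneg hκ0 (by positivity)) hlog3
    have h2 : 0 ≤ (κ / (2 * π)) * Real.log (3 * x 1) :=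
      mul_nonneg (div_nonneg hκ0 (by positivity)) hlog3x
    have h3 : 0 ≤ (1 / (2 * π)) * ∫ y in upperHalfPlane2, f y * ζ y :=
      mul_nonneg (by positivity) hInn
    linarith
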